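/- Let $A, \tilde A$ be strictly upper-triangular $n \times n$ integer matrices with $1 \le k < \ell \le n$ satisfying $A^k_j = \tilde A^k_j = \tfrac{1}{2}(A^k_\ell + \tilde A^k_\ell) A^\ell_j$ for $j \ne \ell$, $\tilde A^i_j = A^i_j$ for all $i$ and $j \ne \ell$, and $\lambda_k = \tilde\lambda_k$, $\lambda_j = \tilde\lambda_j$ for $j \ne \ell$. Define $\Lambda, \tilde\Lambda$ as products along chains as above. Then for every subset $J \subseteq \{1,\dots,n\} \setminus \{k,\ell\}$ with $\max(J) > \ell$: $\Lambda(J \cup \{k\}) = \tilde\Lambda(J \cup \{k\}) = -\tfrac{1}{2}\Lambda(J \cup \{k,\ell\}) - \tfrac{1}{2}\tilde\Lambda(J \cup \{k,\ell\})$. -/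

import Mathlib

open Finset

/-- `Λ(J)`: for `J = {i₀ < ⋯ < i_m}`, the value `(-1)^m λ_{i₀} A^{i₀}_{i₁} ⋯ A^{i_{m-1}}_{i_m}`. -/
noncomputable def chainVal {n : ℕ} (A : Fin n → Fin n → ℤ) (lam : Fin n → ℝ)
    (J : Finset (Fin n)) : ℝ :=
  match J.sort (· ≤ ·) with
  | [] => 0
  | a :: rest =>
      (-1 : ℝ) ^ rest.length * lam a *
        (((a :: rest).zip rest).map (fun p => (A p.1 p.2 : ℝ))).prod

namespace LambdaAux

variable {n : ℕ}

/-- product along consecutive pairs -/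
noncomputable def prodP (A : Fin n → Fin n → ℤ) : List (Fin n) → ℝ
  | [] => 1
  | [_] => 1
  | a :: b :: t => (A a b : ℝ) * prodP A (b :: t)

lemma zipProd (A : Fin n → Fin n → ℤ) :
    ∀ (rest : List (Fin n)) (a : Fin n),
      (((a :: rest).zip rest).map (fun p => (A p.1 p.2 : ℝ))).prod = prodP A (a :: rest)
  | [], a => by simp [prodP]
  | b :: t, a => by
      rw [prodP]
      simpa using congrArg (fun x => (A a b : ℝ) * x) (zipProd A t b)

lemma chainVal_eq_sort {A : Fin n → Fin n → ℤ} {lam : Fin n → ℝ} {J : Finset (Fin n)}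
    {a : Fin n} {rest : List (Fin n)} (h : J.sort (· ≤ ·) = a :: rest) :
    chainVal A lam J = (-1 : ℝ) ^ rest.length * lam a * prodP A (a :: rest) := by
  rw [← zipProd]
  unfold chainVal
  rw [h]

lemma sort_insert' {J : Finset (Fin n)} {k : Fin n} (hk : k ∉ J) :
    (insert k J).sort (· ≤ ·) = (J.sort (· ≤ ·)).orderedInsert (· ≤ ·) k := by
  apply List.Perm.eq_of_pairwise' (Finset.pairwise_sort _ _)
    ((Finset.pairwise_sort _ _).orderedInsert _ _)
  refine List.Perm.trans ?_ (List.perm_orderedInsert _ _ _).symm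
  rw [← Multiset.coe_eq_coe, Finset.sort_eq, Finset.insert_val_of_notMem hk,
    ← Multiset.cons_coe, Finset.sort_eq]

lemma prodP_congr {A At : Fin n → Fin n → ℤ} {l : Fin n}
    (h1 : ∀ i : Fin n, ∀ j ≠ l, At i j = A i j) :
    ∀ L : List (Fin n), l ∉ L → prodP At L = prodP A L
  | [], _ => rfl
  | [_], _ => rfl
  | a :: b :: t, h => by
      rw [prodP, prodP, prodP_congr h1 (b :: t) (by simp_all),
        h1 a b (by rintro rfl; simp at h)]

/-- head/length structure of the two insertions -/
lemma head_struct (k l : Fin n) (hkl : k ≤ l) (s : List (Fin n)) :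
    ∃ (h : Fin n) (t1 t2 : List (Fin n)),
      s.orderedInsert (· ≤ ·) k = h :: t1 ∧
      (s.orderedInsert (· ≤ ·) l).orderedInsert (· ≤ ·) k = h :: t2 ∧
      t2.length = t1.length + 1 := by
  match s with
  | [] => exact ⟨k, [], [l], rfl, by simp [List.orderedInsert, hkl], rfl⟩
  | a :: t =>
    by_cases hka : k ≤ a
    · by_cases hla : l ≤ a
      · exact ⟨k, a :: t, l :: a :: t, by simp [List.orderedInsert, hka],
          by simp [List.orderedInsert, hka, hla, hkl], rfl⟩
      · refine ⟨k, a :: t, a :: t.orderedInsert (· ≤ ·) l,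
          by simp [List.orderedInsert, hka], by simp [List.orderedInsert, hka, hla], ?_⟩
        simp [List.orderedInsert_length]
    · obtain ⟨h, t1, t2, e1, e2, elen⟩ := head_struct k l hkl t
      have hla : ¬ l ≤ a := fun h' => hka (hkl.trans h')
      exact ⟨a, t.orderedInsert (· ≤ ·) k, (t.orderedInsert (· ≤ ·) l).orderedInsert (· ≤ ·) k,
        by simp [List.orderedInsert, hka], by simp [List.orderedInsert, hka, hla],
        by rw [e1, e2]; simp [elen]⟩

lemma main_claim {A At : Fin n → Fin n → ℤ} {k l : Fin n}
    (hA : ∀ i j : Fin n, j ≤ i → A i j = 0)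
    (hkl : k < l)
    (h1 : ∀ i : Fin n, ∀ j ≠ l, At i j = A i j)
    (h2 : ∀ j ≠ l, 2 * A k j = (A k l + At k l) * A l j) :
    ∀ s : List (Fin n), k ∉ s → l ∉ s → (∃ x ∈ s, l < x) →
      prodP A ((s.orderedInsert (· ≤ ·) l).orderedInsert (· ≤ ·) k) +
        prodP At ((s.orderedInsert (· ≤ ·) l).orderedInsert (· ≤ ·) k) =
      2 * prodP A (s.orderedInsert (· ≤ ·) k)
  | [], _, _, hmax => by simp at hmax
  | a :: t, hks, hls, hmax => by
    have hal : a ≠ l := fun h => hls (h ▸ (List.mem_cons_self (a := a) (l := t)))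
    have hlt : l ∉ t := fun h => hls (List.mem_cons_of_mem a h)
    by_cases hka : k ≤ a
    · by_cases hla : l ≤ a
      · have hla' : l < a := lt_of_le_of_ne hla (Ne.symm hal)
        have e1 : (a :: t).orderedInsert (· ≤ ·) k = k :: a :: t := by
          simp [List.orderedInsert, hka]
        have e2 : ((a :: t).orderedInsert (· ≤ ·) l).orderedInsert (· ≤ ·) k
            = k :: l :: a :: t := by
          simp [List.orderedInsert, hla, hkl.le]
        rw [e1, e2]
        simp only [prodP]
        rw [prodP_congr h1 (a :: t) hls, h1 l a hal]
        have thisR : (2:ℝ) * A k a = ((A k l : ℝ) + At k l) * A l a := by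
          exact_mod_cast congrArg (fun x : ℤ => (x : ℝ)) (h2 a hal)
        linear_combination (-(prodP A (a :: t))) * thisR
      · have hal' : a < l := lt_of_not_ge hla
        have hAka : A k a = 0 := by
          have := h2 a hal
          rw [hA l a hal'.le, mul_zero] at this
          omega
        have e1 : (a :: t).orderedInsert (· ≤ ·) k = k :: a :: t := by
          simp [List.orderedInsert, hka]
        have e2 : ((a :: t).orderedInsert (· ≤ ·) l).orderedInsert (· ≤ ·) k
            = k :: a :: t.orderedInsert (· ≤ ·) l := by
          simp [List.orderedInsert, hla, hka]
        rw [e1, e2]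
        simp only [prodP]
        rw [h1 k a hal, hAka]
        push_cast
        ring
    · have hak : a < k := lt_of_not_ge hka
      have hla : ¬ l ≤ a := fun h' => hka (hkl.le.trans h')
      have hkt : k ∉ t := fun h => hks (List.mem_cons_of_mem a h)
      have hmax' : ∃ x ∈ t, l < x := by
        obtain ⟨x, hx, hlx⟩ := hmax
        rcases List.mem_cons.mp hx with rfl | hx
        · exact absurd (hak.trans hkl) (lt_asymm hlx)
        · exact ⟨x, hx, hlx⟩
      have ih := main_claim hA hkl h1 h2 t hkt hlt hmax'
      obtain ⟨h, t1, t2, f1, f2, _⟩ := head_struct k l hkl.le t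
      have e1 : (a :: t).orderedInsert (· ≤ ·) k = a :: t.orderedInsert (· ≤ ·) k := by
        simp [List.orderedInsert, hka]
      have e2 : ((a :: t).orderedInsert (· ≤ ·) l).orderedInsert (· ≤ ·) k
          = a :: (t.orderedInsert (· ≤ ·) l).orderedInsert (· ≤ ·) k := by
        simp [List.orderedInsert, hla, hka]
      have hhl' : h ≠ l := by
        have hmem : h ∈ t.orderedInsert (· ≤ ·) k := f1 ▸ (List.mem_cons_self (a := h) (l := t1))
        have := (List.perm_orderedInsert (· ≤ ·) k t).mem_iff.mp hmem
        rcases List.mem_cons.mp this with rfl | hht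
        · exact hkl.ne
        · exact fun he => hlt (he ▸ hht)
      rw [e1, e2, f1, f2]
      rw [f1, f2] at ih
      simp only [prodP]
      rw [h1 a h hhl']
      linear_combination (A a h : ℝ) * ih

end LambdaAux

open LambdaAux in

/-- **The `Λ`-identity for `max(J) > ℓ`:**
`Λ(J ∪ {k}) = Λ̃(J ∪ {k}) = -½ Λ(J ∪ {k,ℓ}) - ½ Λ̃(J ∪ {k,ℓ})`. -/
theorem Lambda_identity_max_gt {n : ℕ} (A At : Fin n → Fin n → ℤ)
    (hA : ∀ i j : Fin n, j ≤ i → A i j = 0)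
    (hAt : ∀ i j : Fin n, j ≤ i → At i j = 0)
    (k l : Fin n) (hkl : k < l)
    (lam lamt : Fin n → ℝ)
    (h1 : ∀ i : Fin n, ∀ j ≠ l, At i j = A i j)
    (h2 : ∀ j ≠ l, 2 * A k j = (A k l + At k l) * A l j)
    (h3 : ∀ j ≠ l, lamt j = lam j)
    (J : Finset (Fin n)) (hk : k ∉ J) (hl : l ∉ J)
    (hJne : J.Nonempty) (hmax : l < J.max' hJne) :
    chainVal A lam (insert k J) = chainVal At lamt (insert k J) ∧
    chainVal A lam (insert k J) =
      -(1 / 2) * chainVal A lam (insert k (insert l J)) -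
        (1 / 2) * chainVal At lamt (insert k (insert l J)) := by
  have hlk : l ≠ k := hkl.ne'
  have hkil : k ∉ insert l J := by simp [hlk.symm, hk]
  set s := J.sort (· ≤ ·) with hs
  have hsort1 : (insert k J).sort (· ≤ ·) = s.orderedInsert (· ≤ ·) k := sort_insert' hk
  have hsortl : (insert l J).sort (· ≤ ·) = s.orderedInsert (· ≤ ·) l := sort_insert' hl
  have hsort2 : (insert k (insert l J)).sort (· ≤ ·)
      = (s.orderedInsert (· ≤ ·) l).orderedInsert (· ≤ ·) k := by
    rw [sort_insert' hkil, hsortl]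
  obtain ⟨h, t1, t2, e1, e2, elen⟩ := head_struct k l hkl.le s
  have hks : k ∉ s := fun hx => hk ((Finset.mem_sort _).mp hx)
  have hls : l ∉ s := fun hx => hl ((Finset.mem_sort _).mp hx)
  have hmax' : ∃ x ∈ s, l < x := ⟨J.max' hJne, (Finset.mem_sort _).mpr (J.max'_mem hJne), hmax⟩
  have claim := main_claim hA hkl h1 h2 s hks hls hmax'
  rw [e1, e2] at claim
  -- l not in the chain for insert k J
  have hlnot : l ∉ h :: t1 := by
    rw [← e1]
    intro hx
    have := (List.perm_orderedInsert (· ≤ ·) k s).mem_iff.mp hx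
    simp [hlk, hls] at this
  have hhl : h ≠ l := fun he => hlnot (he ▸ (List.mem_cons_self (a := h) (l := t1)))
  have hlamh : lamt h = lam h := h3 h hhl
  have c1 := chainVal_eq_sort (A := A) (lam := lam) (hsort1.trans e1)
  have c1t := chainVal_eq_sort (A := At) (lam := lamt) (hsort1.trans e1)
  have c2 := chainVal_eq_sort (A := A) (lam := lam) (hsort2.trans e2)
  have c2t := chainVal_eq_sort (A := At) (lam := lamt) (hsort2.trans e2)
  have hpcongr : prodP At (h :: t1) = prodP A (h :: t1) := prodP_congr h1 _ hlnot
  constructor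
  · rw [c1, c1t, hpcongr, hlamh]
  · rw [c1, c2, c2t, hlamh, elen, pow_succ]
    linear_combination (-((-1:ℝ) ^ t1.length * lam h / 2)) * claim
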